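/- Let Γ ⊂ ℝⁿ be an open convex symmetric cone with vertex at the origin satisfying {λ : all λᵢ > 0} ⊂ Γ ⊂ {λ : λ₁ + ⋯ + λₙ > 0}. Then there exists a unique μ ∈ [0, n−1] such that the vector (−μ, 1, …, 1) lies on the boundary ∂Γ. -/

import Mathlib

/-- There exists a unique `μ ∈ [0, n-1]` such that `(-μ, 1, …, 1)` lies on the
boundary of an open convex symmetric cone `Γ` squeezed between the positive
orthant and the half-space `{λ : Σ λᵢ > 0}`. -/
theorem stmt_0 (n : ℕ) (hn : 2 ≤ n) (Γ : Set (Fin n → ℝ))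
    (hΓopen : IsOpen Γ) (hΓconv : Convex ℝ Γ)
    (hΓcone : ∀ x ∈ Γ, ∀ s : ℝ, 0 < s → s • x ∈ Γ)
    (hΓsym : ∀ x ∈ Γ, ∀ σ : Equiv.Perm (Fin n), (fun i => x (σ i)) ∈ Γ)
    (hΓorth : {x : Fin n → ℝ | ∀ i, 0 < x i} ⊆ Γ)
    (hΓhalf : Γ ⊆ {x : Fin n → ℝ | 0 < ∑ i, x i}) :
    ∃! μ : ℝ, μ ∈ Set.Icc (0 : ℝ) ((n : ℝ) - 1) ∧
      (fun i : Fin n => if (i : ℕ) = 0 then -μ else 1) ∈ frontier Γ := by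
  haveI : NeZero n := ⟨by omega⟩
  set v : ℝ → Fin n → ℝ := fun μ i => if (i : ℕ) = 0 then -μ else 1 with hv
  -- continuity of v
  have hcont : Continuous v := by
    apply continuous_pi
    intro i
    by_cases h : (i : ℕ) = 0
    · simp only [hv, if_pos h]; exact continuous_neg
    · simp only [hv, if_neg h]; exact continuous_const
  -- sum of coordinates of v μ
  have hsum : ∀ μ : ℝ, ∑ i, v μ i = (n : ℝ) - 1 - μ := by
    intro μ
    have h : ∀ i : Fin n, v μ i = (if i = 0 then -μ - 1 else 0) + 1 := by
      intro i
      rcases eq_or_ne i 0 with h | h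
      · simp [hv, h]
      · have hvne : (i : ℕ) ≠ 0 := Fin.val_ne_zero_iff.mpr h
        simp [hv, hvne, h]
    rw [Finset.sum_congr rfl (fun i _ => h i), Finset.sum_add_distrib,
      Finset.sum_ite_eq' Finset.univ (0 : Fin n) (fun _ => -μ - 1)]
    simp [Finset.card_univ]
    ring
  -- adding a closure point to a Γ point stays in Γ
  have hadd : ∀ x ∈ closure Γ, ∀ y ∈ Γ, x + y ∈ Γ := by
    intro x hx y hy
    have h2 : (1/2 : ℝ) • y + (1/2 : ℝ) • x ∈ interior Γ :=
      hΓconv.combo_interior_closure_mem_interior (by rwa [hΓopen.interior_eq]) hx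
        (by norm_num) (by norm_num) (by norm_num)
    have h3 := hΓcone _ (by rwa [hΓopen.interior_eq] at h2) 2 (by norm_num)
    have e : x + y = (2 : ℝ) • ((1/2 : ℝ) • y + (1/2 : ℝ) • x) := by module
    rwa [e]
  -- negative μ gives interior points
  have hneg : ∀ μ : ℝ, μ < 0 → v μ ∈ Γ := by
    intro μ hμ
    apply hΓorth
    intro i
    by_cases h : (i : ℕ) = 0 <;> simp [hv, h, -Fin.val_eq_zero_iff]
    linarith
  -- downward lemma
  have hdown : ∀ μ' μ : ℝ, μ' < μ → v μ ∈ closure Γ → v μ' ∈ Γ := by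
    intro μ' μ hlt hμ
    set δ : ℝ := (μ - μ') / (2 * (|μ'| + 1)) with hδ
    have habs : (0:ℝ) < |μ'| + 1 := by positivity
    have hδpos : 0 < δ := by
      apply div_pos (by linarith) (by linarith)
    set p : Fin n → ℝ := fun i => if (i : ℕ) = 0 then μ - (1 + δ) * μ' else δ with hp
    have hpΓ : p ∈ Γ := by
      apply hΓorth
      intro i
      by_cases h : (i : ℕ) = 0 <;> simp [hp, h, -Fin.val_eq_zero_iff]
      · -- 0 < μ - (1+δ)*μ'
        have h1 : δ * μ' ≤ δ * |μ'| := mul_le_mul_of_nonneg_left (le_abs_self μ') hδpos.le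
        have h2 : δ * (|μ'| + 1) = (μ - μ') / 2 := by
          rw [hδ]; field_simp
        nlinarith
      · exact hδpos
    have hsumΓ : v μ + p ∈ Γ := hadd _ hμ p hpΓ
    have key := hΓcone _ hsumΓ (1 / (1 + δ)) (by positivity)
    have e : v μ' = (1 / (1 + δ)) • (v μ + p) := by
      funext i
      have h1δ : (1 + δ) ≠ 0 := by positivity
      by_cases h : (i : ℕ) = 0 <;>
        simp only [hv, hp, Pi.smul_apply, Pi.add_apply, if_pos, if_neg, h, if_true,
          reduceIte, smul_eq_mul]
      · field_simp; ring
      · field_simp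
    rwa [e]
  -- closure Γ lies in the closed half-space
  have hclhalf : closure Γ ⊆ {x : Fin n → ℝ | 0 ≤ ∑ i, x i} := by
    have hclosed : IsClosed {x : Fin n → ℝ | 0 ≤ ∑ i, x i} :=
      isClosed_le continuous_const (continuous_finset_sum _ fun i _ => continuous_apply i)
    exact closure_minimal (fun x hx => (le_of_lt (hΓhalf hx) : (0:ℝ) ≤ ∑ i, x i)) hclosed
  set T : Set ℝ := {μ | v μ ∈ closure Γ} with hT
  have hTneg : ∀ μ : ℝ, μ < 0 → μ ∈ T := fun μ h => subset_closure (hneg μ h)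
  have hTbdd' : ∀ μ ∈ T, μ ≤ (n : ℝ) - 1 := by
    intro μ hμ
    have := hclhalf hμ
    simp only [Set.mem_setOf_eq] at this
    rw [hsum μ] at this
    linarith
  have hTne : T.Nonempty := ⟨-1, hTneg _ (by norm_num)⟩
  have hTbdd : BddAbove T := ⟨(n : ℝ) - 1, fun μ hμ => hTbdd' μ hμ⟩
  set μs : ℝ := sSup T with hμs
  have hlt_mem : ∀ μ : ℝ, μ < μs → v μ ∈ Γ := by
    intro μ h
    obtain ⟨t, ht, hlt⟩ := exists_lt_of_lt_csSup hTne h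
    exact hdown μ t hlt ht
  have hclosure : v μs ∈ closure Γ := by
    have htend : Filter.Tendsto (fun k : ℕ => μs - 1 / (k + 1)) Filter.atTop (nhds μs) := by
      have h0 : Filter.Tendsto (fun k : ℕ => 1 / ((k:ℝ) + 1)) Filter.atTop (nhds 0) :=
        tendsto_one_div_add_atTop_nhds_zero_nat
      have := Filter.Tendsto.sub (tendsto_const_nhds (x := μs)) h0
      simpa using this
    apply mem_closure_of_tendsto ((hcont.tendsto μs).comp htend)
    filter_upwards with k
    have : μs - 1 / ((k:ℝ) + 1) < μs := by
      have : (0:ℝ) < 1 / ((k:ℝ) + 1) := by positivity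
      linarith
    exact hlt_mem _ this
  have hnotmem : v μs ∉ Γ := by
    intro hmem
    have hopen : IsOpen (v ⁻¹' Γ) := hΓopen.preimage hcont
    obtain ⟨ε, hε, hball⟩ := Metric.isOpen_iff.mp hopen μs hmem
    have hmem2 : μs + ε / 2 ∈ v ⁻¹' Γ := by
      apply hball
      rw [Metric.mem_ball, Real.dist_eq, show μs + ε / 2 - μs = ε / 2 by ring,
        abs_of_nonneg (by linarith : (0:ℝ) ≤ ε / 2)]
      linarith
    have : μs + ε / 2 ≤ μs := le_csSup hTbdd (subset_closure hmem2)
    linarith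
  have h0 : 0 ≤ μs := by
    by_contra h
    push_neg at h
    have hmem : μs / 2 ∈ T := hTneg _ (by linarith)
    have := le_csSup hTbdd hmem
    linarith
  have h1 : μs ≤ (n : ℝ) - 1 := csSup_le hTne hTbdd'
  refine ⟨μs, ⟨⟨h0, h1⟩, ?_⟩, ?_⟩
  · show v μs ∈ frontier Γ
    rw [hΓopen.frontier_eq]
    exact ⟨hclosure, hnotmem⟩
  · rintro y ⟨⟨hy0, hy1⟩, hyfr⟩
    have hyfr' : v y ∈ frontier Γ := hyfr
    rw [hΓopen.frontier_eq] at hyfr'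
    obtain ⟨hycl, hynot⟩ := hyfr'
    have hle : y ≤ μs := le_csSup hTbdd hycl
    have hge : μs ≤ y := by
      by_contra h
      push_neg at h
      exact hynot (hlt_mem y h)
    linarith
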